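/- Suppose s ≥ 2 is an integer and p ≥ 3 is an odd prime. Then there exist positive integers s' and d' with d' ≤ p such that for all positive integers n: ν_p(f_n(s,-1)) = 0 if d' ∤ n, and ν_p(f_n(s,-1)) = ν_p(s'·n/d') if d' | n. -/

import Mathlib

/-- Generalized Fibonacci sequence: f 0 = 0, f 1 = 1, f (n+2) = s * f (n+1) + t * f n. -/
def genFib (s t : ℤ) : ℕ → ℤ
  | 0 => 0
  | 1 => 1
  | n + 2 => s * genFib s t (n + 1) + t * genFib s t n

namespace ACMS

abbrev F (s : ℤ) (n : ℕ) : ℤ := genFib s (-1) n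

lemma F_zero (s : ℤ) : F s 0 = 0 := rfl
lemma F_one (s : ℤ) : F s 1 = 1 := rfl
lemma F_rec (s : ℤ) (n : ℕ) : F s (n+2) = s * F s (n+1) - F s n := by
  show s * _ + (-1) * _ = _
  ring

def G (s : ℤ) (n : ℕ) : ℤ := 2 * F s (n+1) - s * F s n

lemma G_zero (s : ℤ) : G s 0 = 2 := by simp [G, F_zero, F_one]
lemma G_one (s : ℤ) : G s 1 = s := by
  have h2 : F s 2 = s := by rw [show (2:ℕ) = 0 + 2 from rfl, F_rec]; simp [F_zero, F_one]
  simp [G, h2, F_one]; ring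
lemma G_rec (s : ℤ) (n : ℕ) : G s (n+2) = s * G s (n+1) - G s n := by
  simp only [G, F_rec]; ring

lemma two_step {P : ℕ → Prop} (h0 : P 0) (h1 : P 1)
    (hs : ∀ n, P n → P (n+1) → P (n+2)) : ∀ n, P n := by
  intro n
  have : P n ∧ P (n+1) := by
    induction n with
    | zero => exact ⟨h0, h1⟩
    | succ k ih => exact ⟨ih.2, hs k ih.1 ih.2⟩
  exact this.1

lemma rec_add (s : ℤ) (h : ℕ → ℤ) (hrec : ∀ n, h (n+2) = s * h (n+1) - h n) :
    ∀ n b, h (b + 2*n) + h b = G s n * h (b + n) := by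
  refine two_step ?_ ?_ ?_
  · intro b; simp [G_zero]; ring
  · intro b
    have := hrec b
    simp only [mul_one, G_one]
    rw [show b + 2*1 = b + 2 by ring, this]
    ring
  · intro n ih1 ih2 b
    have e1 := ih2 (b+1)
    have e2 := ih1 (b+2)
    have e3 := hrec (b + 2*n + 2)
    have e4 := hrec b
    have hG := G_rec s n
    have h1 : b + 1 + 2*(n+1) = b + 2*n + 3 := by ring
    have h2 : b + 2 + 2*n = b + 2*n + 2 := by ring
    have h3 : b + 1 + (n+1) = b + n + 2 := by ring
    have h4 : b + 2 + n = b + n + 2 := by ring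
    have h5 : b + 2*(n+2) = b + 2*n + 2 + 2 := by ring
    have h6 : b + (n+2) = b + n + 2 := by ring
    rw [h1, h3] at e1
    rw [h2, h4] at e2
    rw [h5, h6, hG]
    linear_combination s * e1 - e2 + e3 + e4

/-- doubling for F : F(2m) = F m * G m -/
lemma F_double (s : ℤ) (m : ℕ) : F s (2*m) = F s m * G s m := by
  have := rec_add s (F s) (F_rec s) m 0
  simp only [Nat.zero_add, F_zero, add_zero] at this
  linarith [this]

/-- doubling for G : G(2m) = G m ^ 2 - 2 -/
lemma G_double (s : ℤ) (m : ℕ) : G s (2*m) = G s m ^ 2 - 2 := by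
  have := rec_add s (G s) (G_rec s) m 0
  simp only [Nat.zero_add, G_zero] at this
  nlinarith [this]

/-- multiplicativity: F s (n*m) = F s n * F (G s n) m -/
lemma F_mul (s : ℤ) (n : ℕ) : ∀ m, F s (n*m) = F s n * F (G s n) m := by
  refine two_step ?_ ?_ ?_
  · simp [F_zero]
  · simp [F_one]
  · intro m ih1 ih2
    have key := rec_add s (F s) (F_rec s) n (n*m)
    have h1 : n*m + 2*n = n*(m+2) := by ring
    have h2 : n*m + n = n*(m+1) := by ring
    rw [h1, h2] at key
    have hrec2 := F_rec (G s n) m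
    rw [ih1, ih2] at key
    have : F s (n*(m+2)) = G s n * (F s n * F (G s n) (m+1)) - F s n * F (G s n) m := by
      linarith [key]
    rw [this, hrec2]
    ring

/-- Catalan-type identity -/
lemma F_catalan (s : ℤ) : ∀ n, F s (n+2) * F s n = F s (n+1)^2 - 1 := by
  intro n
  induction n with
  | zero => simp [F_zero, F_one]
  | succ k ih =>
    have r1 := F_rec s k
    have r2 := F_rec s (k+1)
    linear_combination F s (k+1) * r2 + ih - F s (k+2) * r1

/-- addition formula -/
lemma F_add (s : ℤ) : ∀ m, ∀ k, F s (m + k + 1) = F s (m+1) * F s (k+1) - F s m * F s k := by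
  refine two_step ?_ ?_ ?_
  · intro k; simp [F_zero, F_one]
  · intro k
    have h2 : F s 2 = s := by rw [show (2:ℕ) = 0 + 2 from rfl, F_rec]; simp [F_zero, F_one]
    have := F_rec s k
    rw [show 1 + k + 1 = k + 2 by ring, this, h2, F_one]
    ring
  · intro m ih1 ih2 k
    have e1 := ih1 k
    have e2 := ih2 k
    have r1 := F_rec s (m + k + 1)
    have r2 := F_rec s (m + 1)
    rw [show m + 1 + k + 1 = m + k + 1 + 1 by ring] at e2
    rw [show m + 2 + k + 1 = m + k + 1 + 2 by ring, r1, r2,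
        show m + 2 = m + 1 + 1 by ring]
    have r0 := F_rec s m
    linear_combination s * e2 - e1 + F s k * r0

/-- F s n ≡ n  mod (s-2) -/
lemma F_mod_sub_two (s : ℤ) : ∀ n : ℕ, (s - 2) ∣ (F s n - n) := by
  refine two_step ?_ ?_ ?_
  · simp [F_zero]
  · simp [F_one]
  · intro n ih1 ih2
    have r := F_rec s n
    have : F s (n+2) - ((n:ℤ)+2) = (s - 2) * F s (n+1) + 2*(F s (n+1) - ((n:ℤ)+1)) - (F s n - n) := by
      rw [r]; push_cast; ring
    rw [show ((n:ℕ)+2 : ℕ) = n + 2 from rfl]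
    push_cast
    rw [show F s (n+2) - ((n:ℤ)+2) = (s - 2) * F s (n+1) + 2*(F s (n+1) - ((n:ℤ)+1)) - (F s n - n) from by rw [r]; push_cast; ring]
    push_cast at ih1 ih2
    exact dvd_sub (dvd_add (Dvd.intro _ rfl) (Dvd.dvd.mul_left ih2 2)) ih1

/-- G s n ≡ 2 mod (s-2) -/
lemma G_mod_sub_two (s : ℤ) (n : ℕ) : (s - 2) ∣ (G s n - 2) := by
  have h1 := F_mod_sub_two s (n+1)
  have h2 := F_mod_sub_two s n
  have : G s n - 2 = 2 * (F s (n+1) - ((n:ℤ)+1)) - s * (F s n - n) - (s - 2) * n := by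
    simp only [G]; push_cast; ring
  rw [this]
  push_cast at h1
  exact dvd_sub (dvd_sub (Dvd.dvd.mul_left h1 2) (Dvd.dvd.mul_left h2 s)) (Dvd.intro _ rfl)

/-- sign: F (-s) n = (-1)^(n+1) * F s n -/
lemma F_neg (s : ℤ) : ∀ n : ℕ, F (-s) n = (-1)^(n+1) * F s n := by
  refine two_step ?_ ?_ ?_
  · simp [F_zero]
  · simp [F_one]
  · intro n ih1 ih2
    rw [F_rec, F_rec, ih1, ih2]
    ring

/-- growth: for s ≥ 2, F is increasing and nonnegative -/
lemma F_grow (s : ℤ) (hs : 2 ≤ s) : ∀ n : ℕ, 1 ≤ F s (n+1) - F s n ∧ 0 ≤ F s n := by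
  intro n
  induction n with
  | zero => simp [F_zero, F_one]
  | succ k ih =>
    obtain ⟨h1, h2⟩ := ih
    have r := F_rec s k
    constructor
    · nlinarith [r]
    · linarith
lemma F_pos (s : ℤ) (hs : 2 ≤ s) (n : ℕ) (hn : 0 < n) : 1 ≤ F s n := by
  obtain ⟨m, rfl⟩ : ∃ m, n = m + 1 := ⟨n - 1, by omega⟩
  have := F_grow s hs m
  linarith [this.1, this.2]

lemma F_ne_zero (s : ℤ) (hs : 2 ≤ s ∨ s ≤ -2) (n : ℕ) (hn : 0 < n) : F s n ≠ 0 := by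
  rcases hs with h | h
  · have := F_pos s h n hn; omega
  · have hneg : F s n = (-1)^(n+1) * F (-s) n := by
      have := F_neg (-s) n; rw [neg_neg] at this; exact this
    have h2 : (2:ℤ) ≤ -s := by omega
    have := F_pos (-s) h2 n hn
    rcases Nat.even_or_odd (n+1) with he | ho
    · rw [hneg, he.neg_one_pow]; intro hcon; omega
    · rw [hneg, ho.neg_one_pow]; intro hcon; omega

lemma padicValInt_F_neg (p : ℕ) (s : ℤ) (n : ℕ) :
    padicValInt p (F (-s) n) = padicValInt p (F s n) := by
  rw [F_neg s n]
  unfold padicValInt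
  rcases Nat.even_or_odd (n+1) with he | ho
  · rw [he.neg_one_pow]; simp
  · rw [ho.neg_one_pow]; simp

/-- G is at least 2 for s ≥ 2 -/
lemma G_ge_two (s : ℤ) (hs : 2 ≤ s) : ∀ n : ℕ, 2 ≤ G s n ∧ G s n ≤ G s (n+1) := by
  refine two_step ?_ ?_ ?_
  · rw [G_zero, G_one]; omega
  · rw [G_one, G_rec, G_zero, G_one]; refine ⟨by omega, by nlinarith⟩
  · intro n ih1 ih2
    obtain ⟨ha, hb⟩ := ih1
    obtain ⟨hc, hd⟩ := ih2
    have r := G_rec s (n+1)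
    exact ⟨by linarith, by nlinarith [r]⟩

/-- Pell-type identity -/
lemma pell (s : ℤ) (n : ℕ) : G s n ^ 2 - (s^2 - 4) * F s n ^ 2 = 4 := by
  have hc := F_catalan s n
  have r := F_rec s n
  simp only [G]
  linear_combination (-4:ℤ) * hc + 4 * F s n * r

/-- power formula in ℤ√(s²-4): (s+√D)^(n+1) = 2^n (G(n+1) + F(n+1) √D) -/
lemma zsq_pow (s : ℤ) : ∀ n : ℕ,
    (⟨s, 1⟩ : ℤ√(s^2-4)) ^ (n+1) = ⟨2^n * G s (n+1), 2^n * F s (n+1)⟩ := by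
  intro n
  induction n with
  | zero =>
    rw [pow_one]
    have h1 : G s 1 = s := G_one s
    ext <;> simp [h1, F_one]
  | succ k ih =>
    rw [pow_succ (⟨s, 1⟩ : ℤ√(s^2-4)) (k+1), ih]
    have hre : (2:ℤ)^k * G s (k+1) * s + (s^2-4) * ((2:ℤ)^k * F s (k+1)) * 1
        = 2^(k+1) * G s (k+2) := by
      simp only [G, F_rec]
      ring
    have him : (2:ℤ)^k * G s (k+1) * 1 + (2:ℤ)^k * F s (k+1) * s
        = 2^(k+1) * F s (k+2) := by
      simp only [G, F_rec]
      ring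
    ext
    · rw [Zsqrtd.re_mul]; exact hre
    · rw [Zsqrtd.im_mul]; simpa using him

/-- Frobenius congruences: p ∣ 2^(p-1) G s p - s^p and p ∣ 2^(p-1) F s p - D^((p-1)/2) -/
lemma frob (s : ℤ) (p : ℕ) (hp : p.Prime) (hodd : Odd p) :
    (p:ℤ) ∣ 2^(p-1) * G s p - s^p ∧
    (p:ℤ) ∣ 2^(p-1) * F s p - (s^2-4)^((p-1)/2) := by
  set D := s^2 - 4 with hD
  obtain ⟨r, hr⟩ : ∃ r : ℤ√D, ((s : ℤ√D) + Zsqrtd.sqrtd)^p = (s : ℤ√D)^p + Zsqrtd.sqrtd^p + (p:ℤ√D) * r := by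
    obtain ⟨r, hr⟩ := exists_add_pow_prime_eq hp ((s : ℤ√D)) (Zsqrtd.sqrtd)
    exact ⟨(s : ℤ√D) * Zsqrtd.sqrtd * r, hr.trans (by ring)⟩
  have hsum : ((s : ℤ√D)) + Zsqrtd.sqrtd = (⟨s, 1⟩ : ℤ√D) := by
    ext <;> simp [Zsqrtd.re_intCast, Zsqrtd.im_intCast]
  have hyp : (Zsqrtd.sqrtd : ℤ√D)^p = ((D^((p-1)/2) : ℤ) : ℤ√D) * Zsqrtd.sqrtd := by
    obtain ⟨m, hm⟩ := hodd
    have h2 : (p-1)/2 = m := by omega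
    rw [h2, show p = 2*m+1 from hm, pow_succ, pow_mul, sq, Zsqrtd.dmuld]
    norm_cast
  have hrhs : ((s : ℤ√D))^p + (Zsqrtd.sqrtd : ℤ√D)^p + (p:ℤ√D) * r
      = (⟨s^p + p*r.re, D^((p-1)/2) + p*r.im⟩ : ℤ√D) := by
    have h1 : ((s : ℤ√D))^p = ((s^p : ℤ) : ℤ√D) := by push_cast; ring
    have h2 : ((p:ℕ) : ℤ√D) = ((p : ℤ) : ℤ√D) := by push_cast; ring
    rw [hyp]
    ext <;> simp only [h1, h2, Zsqrtd.re_intCast, Zsqrtd.im_intCast, Zsqrtd.re_mul,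
      Zsqrtd.im_mul, Zsqrtd.re_add, Zsqrtd.im_add, Zsqrtd.re_sqrtd, Zsqrtd.im_sqrtd] <;> ring
  obtain ⟨m, hm⟩ : ∃ m, p = m + 1 := ⟨p - 1, by have := hp.two_le; omega⟩
  have hpow := zsq_pow s m
  rw [← hm] at hpow
  rw [hsum, hpow, hrhs] at hr
  rw [Zsqrtd.ext_iff] at hr
  simp only at hr
  have hm1 : m = p - 1 := by omega
  rw [hm1] at hr
  exact ⟨⟨r.re, by linarith [hr.1]⟩, ⟨r.im, by linarith [hr.2]⟩⟩

lemma two_F_succ (s : ℤ) (n : ℕ) : 2 * F s (n+1) = G s n + s * F s n := by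
  simp only [G]; ring

lemma two_G_succ (s : ℤ) (n : ℕ) : 2 * G s (n+1) = s * G s n + (s^2-4) * F s n := by
  simp only [G, F_rec]; ring

lemma prime_int (p : ℕ) (hp : p.Prime) : Prime (p:ℤ) :=
  Int.prime_iff_natAbs_prime.mpr (by simpa using hp)

/-- existence of small index with p ∣ F s m -/
lemma exists_rank (s : ℤ) (p : ℕ) (hp : p.Prime) (hodd : Odd p) (hp3 : 3 ≤ p) :
    ∃ m, 0 < m ∧ m ≤ p ∧ (p:ℤ) ∣ F s m := by
  by_cases hD : (p:ℤ) ∣ (s-2)*(s+2)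
  · rcases (prime_int p hp).2.2 _ _ hD with h | h
    · refine ⟨p, by omega, le_refl _, ?_⟩
      have h10 : (p:ℤ) ∣ F s p - p := dvd_trans h (F_mod_sub_two s p)
      have : (p:ℤ) ∣ (F s p - p) + p := dvd_add h10 (dvd_refl _)
      simpa using this
    · refine ⟨p, by omega, le_refl _, ?_⟩
      have hneg : ((-s:ℤ) - 2) ∣ F (-s) p - p := F_mod_sub_two (-s) p
      have h' : (p:ℤ) ∣ F (-s) p - p := dvd_trans (by rw [show (-s:ℤ) - 2 = -(s+2) by ring]; exact dvd_neg.mpr h) hneg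
      have h'' : (p:ℤ) ∣ F (-s) p := by
        have := dvd_add h' (dvd_refl (p:ℤ)); simpa using this
      have := F_neg s p
      rw [this] at h''
      have hev : Even (p+1) := Odd.add_one hodd
      rw [hev.neg_one_pow, one_mul] at h''
      exact h''
  · haveI := Fact.mk hp
    have cast0 : ∀ x:ℤ, (p:ℤ) ∣ x ↔ ((x : ZMod p) = 0) :=
      fun x => (ZMod.intCast_zmod_eq_zero_iff_dvd x p).symm
    have h2K : (2 : ZMod p) ≠ 0 := by
      intro h
      have : (p:ℕ) ∣ 2 := by
        have := (ZMod.natCast_eq_zero_iff 2 p).mp (by exact_mod_cast h)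
        exact this
      have := Nat.le_of_dvd (by norm_num) this
      omega
    have hfrob := frob s p hp hodd
    have hpow1 : (2 : ZMod p)^(p-1) = 1 := ZMod.pow_card_sub_one_eq_one h2K
    have e1 : ((G s p : ℤ) : ZMod p) = (s : ZMod p) := by
      have := (cast0 _).mp hfrob.1
      push_cast at this
      rw [hpow1] at this
      have hsp : (s : ZMod p)^p = (s : ZMod p) := ZMod.pow_card _
      rw [hsp] at this
      linear_combination this
    have hDK : ((s:ZMod p)^2 - 4) ≠ 0 := by
      intro h
      apply hD
      rw [cast0]
      push_cast
      linear_combination h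
    have e2 : ((F s p : ℤ) : ZMod p) = ((s:ZMod p)^2 - 4)^((p-1)/2) := by
      have := (cast0 _).mp hfrob.2
      push_cast at this
      rw [hpow1] at this
      linear_combination this
    obtain ⟨t, ht⟩ := hodd
    have e3 : ((F s p : ℤ) : ZMod p)^2 = 1 := by
      rw [e2, ← pow_mul, show (p-1)/2*2 = p - 1 by omega]
      exact ZMod.pow_card_sub_one_eq_one hDK
    have e4 : ((F s p : ℤ) : ZMod p) = 1 ∨ ((F s p : ℤ) : ZMod p) = -1 := by
      rw [sq] at e3; exact mul_self_eq_one_iff.mp e3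
    have hrec : ((F s (p-1) : ℤ) : ZMod p) = (s:ZMod p) * ((F s p : ℤ) : ZMod p) - ((F s (p+1) : ℤ) : ZMod p) := by
      have hr := F_rec s (p-1)
      rw [show p - 1 + 1 = p by omega, show p - 1 + 2 = p + 1 by omega] at hr
      have : ((F s (p+1) : ℤ) : ZMod p) = (s:ZMod p) * ((F s p : ℤ) : ZMod p) - ((F s (p-1) : ℤ) : ZMod p) := by
        rw [hr]; push_cast; ring
      linear_combination this
    have h2f : (2:ZMod p) * ((F s (p+1) : ℤ) : ZMod p) = ((G s p : ℤ) : ZMod p) + (s:ZMod p) * ((F s p : ℤ) : ZMod p) := by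
      have := two_F_succ s p
      have := congrArg (fun x : ℤ => (x : ZMod p)) this
      push_cast at this
      exact this
    rcases e4 with h1 | h1
    · refine ⟨p - 1, by omega, by omega, ?_⟩
      rw [cast0]
      have hfp1 : ((F s (p+1) : ℤ) : ZMod p) = (s:ZMod p) := by
        have h2 : (2:ZMod p) * ((F s (p+1) : ℤ) : ZMod p) = 2 * (s:ZMod p) := by
          rw [h2f, e1, h1]; ring
        exact mul_left_cancel₀ h2K h2
      rw [hrec, h1, hfp1]; ring
    · have hfp1 : ((F s (p+1) : ℤ) : ZMod p) = 0 := by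
        have h2 : (2:ZMod p) * ((F s (p+1) : ℤ) : ZMod p) = 2 * 0 := by
          rw [h2f, e1, h1]; ring
        exact mul_left_cancel₀ h2K h2
      have hgp1 : ((G s (p+1) : ℤ) : ZMod p) = 2 := by
        have hg := two_G_succ s p
        have hg2 := congrArg (fun x : ℤ => (x : ZMod p)) hg
        push_cast at hg2
        rw [e1, h1] at hg2
        have h2 : (2:ZMod p) * ((G s (p+1) : ℤ) : ZMod p) = 2 * 2 := by
          rw [hg2]; ring
        exact mul_left_cancel₀ h2K h2
      set m := (p+1)/2 with hmdef
      have h2m : 2 * m = p + 1 := by omega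
      have hFd := F_double s m
      rw [h2m] at hFd
      have hcast := congrArg (fun x : ℤ => (x : ZMod p)) hFd
      push_cast at hcast
      rw [hfp1] at hcast
      rcases mul_eq_zero.mp hcast.symm with hf | hg
      · exact ⟨m, by omega, by omega, (cast0 _).mpr hf⟩
      · exfalso
        have hGd := G_double s m
        rw [h2m] at hGd
        have hc2 := congrArg (fun x : ℤ => (x : ZMod p)) hGd
        push_cast at hc2
        rw [hgp1, hg] at hc2
        have : (4 : ZMod p) = 0 := by linear_combination hc2
        have hd4 : (p:ℕ) ∣ 4 := by
          have := (ZMod.natCast_eq_zero_iff 4 p).mp (by exact_mod_cast this)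
          exact this
        have := Nat.le_of_dvd (by norm_num) hd4
        interval_cases p <;> omega

lemma dvd_of_dvd_index (s : ℤ) (p d : ℕ) (hpd : (p:ℤ) ∣ F s d) (k : ℕ) :
    (p:ℤ) ∣ F s (d*k) := by
  rw [F_mul]
  exact hpd.mul_right _

lemma rank_dvd_iff (s : ℤ) (p : ℕ) (hp : p.Prime) (d : ℕ) (hd0 : 0 < d)
    (hpd : (p:ℤ) ∣ F s d)
    (hmin : ∀ r, 0 < r → r < d → ¬ (p:ℤ) ∣ F s r) (n : ℕ) :
    (p:ℤ) ∣ F s n ↔ d ∣ n := by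
  constructor
  · intro hn
    by_contra hnd
    have hr0 : n % d ≠ 0 := fun h => hnd (Nat.dvd_of_mod_eq_zero h)
    have hrd : n % d < d := Nat.mod_lt _ hd0
    have hn' : d * (n / d) + n % d = n := Nat.div_add_mod n d
    obtain ⟨r', hr'⟩ : ∃ r', n % d = r' + 1 := ⟨n % d - 1, by omega⟩
    have hadd := F_add s (d*(n/d)) r'
    have hdq : (p:ℤ) ∣ F s (d*(n/d)) := dvd_of_dvd_index s p d hpd _
    have h1 : (p:ℤ) ∣ F s (d*(n/d)+1) * F s (r'+1) := by
      have heq : F s (d*(n/d)+1) * F s (r'+1)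
          = F s (d*(n/d) + r' + 1) + F s (d*(n/d)) * F s r' := by linarith [hadd]
      rw [heq, show d*(n/d) + r' + 1 = n by omega]
      exact dvd_add hn (hdq.mul_right _)
    rcases (prime_int p hp).2.2 _ _ h1 with h2 | h2
    · have hcat := F_catalan s (d*(n/d))
      have hone : (p:ℤ) ∣ 1 := by
        have hsq : (p:ℤ) ∣ F s (d*(n/d)+1)^2 := by rw [sq]; exact h2.mul_right _
        have heq2 : (1:ℤ) = F s (d*(n/d)+1)^2 - F s (d*(n/d)+2) * F s (d*(n/d)) := by
          linarith [hcat]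
        rw [heq2]
        exact dvd_sub hsq ((hdq.mul_left _))
      have := Int.le_of_dvd one_pos hone
      have := hp.two_le
      omega
    · exact hmin (r'+1) (by omega) (by omega) h2
  · rintro ⟨k, rfl⟩
    exact dvd_of_dvd_index s p d hpd k

lemma claimA (p : ℕ) (hp : p.Prime) (hp3 : 3 ≤ p) (s₁ : ℤ) (hs₁ : 2 ≤ s₁ ∨ s₁ ≤ -2)
    (hcong : ((p:ℤ))^2 ∣ s₁ - 2) :
    ∀ k, 0 < k → padicValInt p (F s₁ k) = padicValNat p k := by
  haveI := Fact.mk hp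
  intro k
  induction k using Nat.strong_induction_on with
  | _ k ih =>
  intro hk
  by_cases hpk : p ∣ k
  · obtain ⟨k', rfl⟩ := hpk
    have hk' : 0 < k' := by
      rcases Nat.eq_zero_or_pos k' with h | h
      · subst h; simp at hk
      · exact h
    have hmul := F_mul s₁ k' p
    set s₂ := G s₁ k' with hs2
    have hcong2 : ((p:ℤ))^2 ∣ s₂ - 2 := dvd_trans hcong (G_mod_sub_two s₁ k')
    obtain ⟨c, hc⟩ : ∃ c, F s₂ p = p * (1 + p * c) := by
      obtain ⟨c, hc⟩ := dvd_trans hcong2 (F_mod_sub_two s₂ p)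
      exact ⟨c, by linarith [hc]⟩
    have hunit : ¬ (p:ℤ) ∣ (1 + p*c) := by
      intro h
      have h1 : (p:ℤ) ∣ 1 := by
        have := dvd_sub h (Dvd.intro c rfl)
        simpa using this
      have := Int.le_of_dvd one_pos h1
      have := hp.two_le
      omega
    have hune : (1:ℤ) + p*c ≠ 0 := by
      intro h
      exact hunit (by rw [h]; exact dvd_zero _)
    have hpz : ((p:ℤ)) ≠ 0 := by
      have := hp.pos
      omega
    have hv2 : padicValInt p (F s₂ p) = 1 := by
      rw [hc, padicValInt.mul hpz hune, padicValInt.self hp.one_lt,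
        padicValInt.eq_zero_of_not_dvd hunit]
    have hF1 : F s₁ k' ≠ 0 := F_ne_zero s₁ hs₁ k' hk'
    have hF2ne : F s₂ p ≠ 0 := by
      rw [hc]; exact mul_ne_zero hpz hune
    have hlt : k' < p * k' := by
      have := hp.two_le; nlinarith
    rw [show p * k' = k' * p by ring, hmul, padicValInt.mul hF1 hF2ne, hv2,
      ih k' hlt hk']
    have hr : padicValNat p (p*k') = 1 + padicValNat p k' := by
      rw [padicValNat.mul (by omega) (by omega), padicValNat.self hp.one_lt]
    rw [show k' * p = p * k' by ring, hr]
    omega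
  · have hps : (p:ℤ) ∣ s₁ - 2 := dvd_trans (dvd_pow_self _ two_ne_zero) hcong
    have hnd : ¬ (p:ℤ) ∣ F s₁ k := by
      intro hdvd
      apply hpk
      have h1 : (p:ℤ) ∣ F s₁ k - k := dvd_trans hps (F_mod_sub_two s₁ k)
      have h2 : (p:ℤ) ∣ (k:ℤ) := by
        have := dvd_sub hdvd h1
        simpa using this
      exact_mod_cast h2
    rw [padicValInt.eq_zero_of_not_dvd hnd, padicValNat.eq_zero_of_not_dvd hpk]

lemma sq_dvd_of_dvd_mul (p : ℕ) (hp : p.Prime) (a b : ℤ)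
    (h : ((p:ℤ))^2 ∣ a*b) (hnb : ¬(p:ℤ) ∣ b) : ((p:ℤ))^2 ∣ a := by
  have hpz := prime_int p hp
  have hpne : (p:ℤ) ≠ 0 := by have := hp.pos; omega
  have hpa : (p:ℤ) ∣ a := by
    rcases hpz.2.2 a b (dvd_trans (dvd_pow_self _ two_ne_zero) h) with h' | h'
    · exact h'
    · exact absurd h' hnb
  obtain ⟨a', rfl⟩ := hpa
  have h2 : (p:ℤ) ∣ a' * b := by
    obtain ⟨t, ht⟩ := h
    refine ⟨t, mul_left_cancel₀ hpne ?_⟩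
    linear_combination ht - t * sq ((p:ℤ))
  rcases hpz.2.2 _ _ h2 with h' | h'
  · obtain ⟨a'', rfl⟩ := h'
    exact ⟨a'', by ring⟩
  · exact absurd h' hnb

end ACMS

/-- Valuation conjecture of ACMS, case of an odd prime. -/
theorem valuation_conj_prime (s : ℤ) (hs : 2 ≤ s) (p : ℕ) (hp : p.Prime) (hodd : Odd p)
    (hp3 : 3 ≤ p) :
    ∃ s' d' : ℕ, 0 < s' ∧ 0 < d' ∧ d' ≤ p ∧
      ∀ n : ℕ, 0 < n →
        (¬ d' ∣ n → padicValInt p (genFib s (-1) n) = 0) ∧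
        (d' ∣ n → padicValInt p (genFib s (-1) n) = padicValNat p (s' * (n / d'))) := by
  classical
  haveI := Fact.mk hp
  obtain ⟨m, hm0, hmp, hmdvd⟩ := ACMS.exists_rank s p hp hodd hp3
  have hex : ∃ n, 0 < n ∧ (p:ℤ) ∣ ACMS.F s n := ⟨m, hm0, hmdvd⟩
  set d := Nat.find hex with hd
  obtain ⟨hd0, hdF⟩ := Nat.find_spec hex
  have hdp : d ≤ p := le_trans (Nat.find_min' hex ⟨hm0, hmdvd⟩) hmp
  have hmin : ∀ r, 0 < r → r < d → ¬(p:ℤ) ∣ ACMS.F s r := by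
    intro r h1 h2 hdvd
    exact Nat.find_min hex h2 ⟨h1, hdvd⟩
  have hiff := fun n => ACMS.rank_dvd_iff s p hp d hd0 hdF hmin n
  set e := padicValInt p (ACMS.F s d) with he
  refine ⟨p^e, d, pow_pos hp.pos e, hd0, hdp, ?_⟩
  intro n hn
  constructor
  · intro hnd
    exact padicValInt.eq_zero_of_not_dvd (fun h => hnd ((hiff n).mp h))
  · intro hdn
    obtain ⟨k, hk⟩ := hdn
    have hkpos : 0 < k := by
      rcases Nat.eq_zero_or_pos k with h | h
      · subst h; omega
      · exact h
    have hndk : n / d = k := by rw [hk]; exact Nat.mul_div_cancel_left k hd0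
    set s₂ := ACMS.G s d with hs2
    have hmul : ACMS.F s n = ACMS.F s d * ACMS.F s₂ k := by
      rw [hk]; exact ACMS.F_mul s d k
    have hs₂2 : 2 ≤ s₂ := (ACMS.G_ge_two s hs d).1
    have hpell := ACMS.pell s d
    have hp2dvd : ((p:ℤ))^2 ∣ (s₂-2)*(s₂+2) := by
      have hprod : (s₂ - 2) * (s₂ + 2) = (s^2-4) * ACMS.F s d ^ 2 := by
        linear_combination hpell
      rw [hprod]
      exact Dvd.dvd.mul_left (pow_dvd_pow_of_dvd hdF 2) _
    have hnotboth : ¬ ((p:ℤ) ∣ (s₂-2) ∧ (p:ℤ) ∣ (s₂+2)) := by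
      rintro ⟨h1, h2⟩
      have h4 : (p:ℤ) ∣ 4 := by
        have := dvd_sub h2 h1
        simpa using this
      have h4' : (p:ℕ) ∣ 4 := by exact_mod_cast h4
      have h2' : (p:ℕ) ∣ 2 := hp.dvd_of_dvd_pow (show p ∣ 2^2 by rw [show (2:ℕ)^2 = 4 by norm_num]; exact h4')
      have := Nat.le_of_dvd (by norm_num) h2'
      omega
    have hvalk : padicValInt p (ACMS.F s₂ k) = padicValNat p k := by
      by_cases hcase : (p:ℤ) ∣ (s₂+2)
      · have hnb : ¬ (p:ℤ) ∣ (s₂-2) := fun h => hnotboth ⟨h, hcase⟩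
        have hsq : ((p:ℤ))^2 ∣ s₂ + 2 := by
          apply ACMS.sq_dvd_of_dvd_mul p hp _ _ _ hnb
          rw [show (s₂+2)*(s₂-2) = (s₂-2)*(s₂+2) by ring]
          exact hp2dvd
        have hkey := ACMS.claimA p hp hp3 (-s₂) (Or.inr (by omega))
          (by rw [show (-s₂) - 2 = -(s₂+2) by ring]; exact hsq.neg_right) k hkpos
        rw [← ACMS.padicValInt_F_neg p s₂ k]
        exact hkey
      · have hsq : ((p:ℤ))^2 ∣ s₂ - 2 :=
          ACMS.sq_dvd_of_dvd_mul p hp _ _ hp2dvd hcase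
        exact ACMS.claimA p hp hp3 s₂ (Or.inl hs₂2) hsq k hkpos
    have hFd_ne : ACMS.F s d ≠ 0 := ACMS.F_ne_zero s (Or.inl hs) d hd0
    have hFk_ne : ACMS.F s₂ k ≠ 0 := ACMS.F_ne_zero s₂ (Or.inl hs₂2) k hkpos
    have lhs : padicValInt p (ACMS.F s n) = e + padicValNat p k := by
      rw [hmul, padicValInt.mul hFd_ne hFk_ne, hvalk]
    have rhs : padicValNat p (p^e * (n / d)) = e + padicValNat p k := by
      rw [hndk, padicValNat.mul (pow_ne_zero e (by omega)) (by omega),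
        padicValNat.prime_pow]
    rw [show genFib s (-1) n = ACMS.F s n from rfl, lhs, rhs]
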